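/- Let α be a type of messages with a strict partial order ≺. Define a relation Swap on List α by: Swap l l' holds iff there exist lists l₀, l₃ and concurrent elements a, b with l = l₀ ++ a :: b :: l₃ and l' = l₀ ++ b :: a :: l₃. If l₁ and l₂ are permutations of each other, each has no duplicate elements, and each respects causal order, then l₂ is reachable from l₁ under the reflexive–transitive closure of Swap. (One delivery sequence can be permuted into the other by repeatedly swapping adjacent concurrent messages.) -/

import Mathlib

/-- A list `l` respects causal order w.r.t. the causal precedence relation
`prec`: it has no duplicates, and whenever `prec a b` and both occur in `l`,
then `a` occurs before `b` in `l`. -/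
def RespectsCausalOrder {α : Type*} (prec : α → α → Prop) (l : List α) : Prop :=
  l.Nodup ∧ ∀ a b : α, prec a b → a ∈ l → b ∈ l → [a, b].Sublist l

/-- `Swap prec l l'` holds iff `l'` is obtained from `l` by swapping two
adjacent concurrent elements. -/
def Swap {α : Type*} (prec : α → α → Prop) (l l' : List α) : Prop :=
  ∃ (l₀ l₃ : List α) (a b : α), ¬ prec a b ∧ ¬ prec b a ∧
    l = l₀ ++ a :: b :: l₃ ∧ l' = l₀ ++ b :: a :: l₃

private lemma pair_sublist_asymm {α : Type*} {a b : α} :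
    ∀ {l : List α}, l.Nodup → [a, b].Sublist l → [b, a].Sublist l → False := by
  intro l
  induction l with
  | nil => intro _ h; cases h
  | cons c l ih =>
    intro hnd h1 h2
    have hc : c ∉ l := (List.nodup_cons.mp hnd).1
    have hnd' : l.Nodup := (List.nodup_cons.mp hnd).2
    cases h1 with
    | cons _ h1' =>
      cases h2 with
      | cons _ h2' => exact ih hnd' h1' h2'
      | cons_cons _ h2' =>
        exact hc (h1'.subset (by simp))
    | cons_cons _ h1' =>
      cases h2 with
      | cons _ h2' => exact hc (h2'.subset (by simp))
      | cons_cons _ h2' => exact hc (h2'.subset (by simp))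

private lemma sublist_erase_of_not_mem {α : Type*} [DecidableEq α] {a : α} :
    ∀ {s l : List α}, s.Sublist l → a ∉ s → s.Sublist (l.erase a) := by
  intro s l h
  induction h with
  | slnil => intro _; exact List.nil_sublist _
  | @cons l₁ l₂ b h ih =>
    intro ha
    by_cases hb : b = a
    · simp only [List.erase_cons, hb]
      simpa using h
    · rw [List.erase_cons, if_neg (by simpa using hb)]
      exact (ih ha).cons b
  | @cons_cons l₁ l₂ b h ih =>
    intro ha
    have hba : b ≠ a := fun e => ha (e ▸ List.mem_cons_self)
    rw [List.erase_cons, if_neg (by simpa using hba)]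
    exact (ih (fun hm => ha (List.mem_cons_of_mem _ hm))).cons₂ b

private lemma swap_cons {α : Type*} {prec : α → α → Prop} {l l' : List α} (c : α)
    (h : Swap prec l l') : Swap prec (c :: l) (c :: l') := by
  obtain ⟨l₀, l₃, a, b, h1, h2, rfl, rfl⟩ := h
  exact ⟨c :: l₀, l₃, a, b, h1, h2, rfl, rfl⟩

private lemma rtg_swap_cons {α : Type*} {prec : α → α → Prop} {l l' : List α} (c : α)
    (h : Relation.ReflTransGen (Swap prec) l l') :
    Relation.ReflTransGen (Swap prec) (c :: l) (c :: l') := by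
  induction h with
  | refl => exact Relation.ReflTransGen.refl
  | tail _ hstep ih => exact ih.tail (swap_cons c hstep)

private lemma bubble {α : Type*} {prec : α → α → Prop} (a : α) :
    ∀ (u v : List α), (∀ x ∈ u, ¬ prec a x ∧ ¬ prec x a) →
      Relation.ReflTransGen (Swap prec) (u ++ a :: v) (a :: (u ++ v)) := by
  intro u
  induction u with
  | nil => intro v _; exact Relation.ReflTransGen.refl
  | cons x u ih =>
    intro v h
    have hx := h x (List.mem_cons_self)
    have step : Swap prec (x :: a :: (u ++ v)) (a :: x :: (u ++ v)) :=
      ⟨[], u ++ v, x, a, hx.2, hx.1, rfl, rfl⟩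
    have h1 : Relation.ReflTransGen (Swap prec) ((x :: u) ++ a :: v) (x :: (a :: (u ++ v))) := by
      simpa using rtg_swap_cons x (ih v (fun y hy => h y (List.mem_cons_of_mem _ hy)))
    exact h1.trans (Relation.ReflTransGen.single (by simpa using step))

/-- One causal delivery sequence can be permuted into another by repeatedly
swapping adjacent concurrent messages. -/
theorem reflTransGen_swap_of_respectsCausalOrder {α : Type*}
    (prec : α → α → Prop)
    (hirr : ∀ a : α, ¬ prec a a)
    (htrans : ∀ a b c : α, prec a b → prec b c → prec a c)
    (l₁ l₂ : List α) (hperm : l₁.Perm l₂)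
    (h₁ : RespectsCausalOrder prec l₁) (h₂ : RespectsCausalOrder prec l₂) :
    Relation.ReflTransGen (Swap prec) l₁ l₂ := by
  classical
  induction l₂ generalizing l₁ with
  | nil =>
    rw [List.perm_nil.mp hperm]
  | cons a t ih =>
    obtain ⟨hnd₁, hord₁⟩ := h₁
    obtain ⟨hnd₂, hord₂⟩ := h₂
    have ha₁ : a ∈ l₁ := hperm.mem_iff.mpr (List.mem_cons_self)
    obtain ⟨u, v, rfl⟩ := List.append_of_mem ha₁
    have hnat : a ∉ t := (List.nodup_cons.mp hnd₂).1
    have hau : a ∉ u := by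
      intro hmem
      have := (List.nodup_append'.mp hnd₁).2.2
      exact this hmem (List.mem_cons_self)
    have hav : a ∉ v := by
      have := (List.nodup_append'.mp hnd₁).2.1
      exact (List.nodup_cons.mp this).1
    -- every element of u is concurrent with a
    have hconc : ∀ x ∈ u, ¬ prec a x ∧ ¬ prec x a := by
      intro x hx
      have hx₁ : x ∈ u ++ a :: v := List.mem_append.mpr (Or.inl hx)
      have hx₂ : x ∈ a :: t := hperm.mem_iff.mp hx₁
      have hxa : x ≠ a := fun e => hau (e ▸ hx)
      have hxt : x ∈ t := by
        cases List.mem_cons.mp hx₂ with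
        | inl e => exact absurd e hxa
        | inr h => exact h
      constructor
      · intro hp
        -- prec a x → [a,x] <+ l₁, but [x,a] <+ l₁ since x ∈ u
        have hs1 : [a, x].Sublist (u ++ a :: v) := hord₁ a x hp ha₁ hx₁
        have hs2 : [x, a].Sublist (u ++ a :: v) := by
          have : [x].Sublist u := List.singleton_sublist.mpr hx
          have h' : ([x] ++ [a]).Sublist (u ++ a :: v) :=
            List.Sublist.append this (List.singleton_sublist.mpr (List.mem_cons_self))
          simpa using h'
        exact pair_sublist_asymm hnd₁ hs1 hs2
      · intro hp
        -- prec x a → [x,a] <+ a :: t, impossible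
        have hs : [x, a].Sublist (a :: t) :=
          hord₂ x a hp hx₂ (List.mem_cons_self)
        cases hs with
        | cons _ h' => exact hnat (h'.subset (by simp))
        | cons_cons _ h' => exact hxa rfl
    have hperm' : (u ++ v).Perm t := by
      have h1 : (u ++ a :: v).Perm (a :: (u ++ v)) := List.perm_middle
      exact (h1.symm.trans hperm).cons_inv
    have hsub : (u ++ v).Sublist (u ++ a :: v) :=
      List.Sublist.append_left (List.sublist_cons_self a v) u
    have hresp₁ : RespectsCausalOrder prec (u ++ v) := by
      refine ⟨hnd₁.sublist hsub, ?_⟩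
      intro x y hp hx hy
      have hna : a ∉ u ++ v := by
        simp only [List.mem_append]
        rintro (h | h)
        exacts [hau h, hav h]
      have hxa : x ≠ a := fun e => hna (e ▸ hx)
      have hya : y ≠ a := fun e => hna (e ▸ hy)
      have hs : [x, y].Sublist (u ++ a :: v) :=
        hord₁ x y hp (hsub.subset hx) (hsub.subset hy)
      have he : (u ++ a :: v).erase a = u ++ v := by
        rw [List.erase_append_right _ hau, List.erase_cons_head]
      have := sublist_erase_of_not_mem hs
        (by simp only [List.mem_cons, List.not_mem_nil, or_false]
            rintro (e | e) <;> [exact hxa e.symm; exact hya e.symm])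
      rwa [he] at this
    have hresp₂ : RespectsCausalOrder prec t := by
      refine ⟨(List.nodup_cons.mp hnd₂).2, ?_⟩
      intro x y hp hx hy
      have hs : [x, y].Sublist (a :: t) :=
        hord₂ x y hp (List.mem_cons_of_mem _ hx) (List.mem_cons_of_mem _ hy)
      cases hs with
      | cons _ h' => exact h'
      | cons_cons h' => exact absurd hx hnat
    exact (bubble a u v hconc).trans (rtg_swap_cons a (ih (u ++ v) hperm' hresp₁ hresp₂))
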